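/- Let Ω ⊆ ℝ² be an open bounded set, f ∈ L²(Ω) with values in [0,1], and μ > 0. Then the generalized two-phase anisotropic Chan–Vese functional G_μ admits a minimizer (u, c₁, c₂) ∈ BV(Ω) × [0,1]² over L²(Ω) × [0,1]², and this minimizer satisfies u(x) ∈ [0,1] for a.e. x ∈ Ω. -/

import Mathlib

open MeasureTheory Set Filter
open scoped ENNReal

noncomputable section

/-- Divergence of a vector field on `ℝ²`. -/
def div2 (η : ℝ × ℝ → ℝ × ℝ) (x : ℝ × ℝ) : ℝ :=
  fderiv ℝ (fun y => (η y).1) x (1, 0) + fderiv ℝ (fun y => (η y).2) x (0, 1)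

/-- The anisotropic (`ℓ¹`) total variation `|Du|₁(Ω)`. -/
def anisoTV (Ω : Set (ℝ × ℝ)) (u : ℝ × ℝ → ℝ) : ℝ≥0∞ :=
  sSup { t : ℝ≥0∞ | ∃ η : ℝ × ℝ → ℝ × ℝ, ContDiff ℝ 1 η ∧ HasCompactSupport η ∧
    tsupport η ⊆ Ω ∧ (∀ x, |(η x).1| ≤ 1 ∧ |(η x).2| ≤ 1) ∧
    t = ENNReal.ofReal (∫ x in Ω, u x * div2 η x) }

/-- The anisotropic perimeter `Per₁(E;Ω)`. -/
def Per1 (E Ω : Set (ℝ × ℝ)) : ℝ≥0∞ := anisoTV Ω (E.indicator 1)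

/-- The anisotropic Rudin–Osher–Fatemi functional. -/
def AROF (Ω : Set (ℝ × ℝ)) (f : ℝ × ℝ → ℝ) (lam : ℝ) (u : ℝ × ℝ → ℝ) : ℝ≥0∞ :=
  anisoTV Ω u + ENNReal.ofReal (lam / 2 * ∫ x in Ω, (u x - f x) ^ 2)

open scoped Classical in
/-- The generalized two-phase anisotropic Chan–Vese functional `G_μ`. -/
def Gfun (Ω : Set (ℝ × ℝ)) (f : ℝ × ℝ → ℝ) (μ : ℝ) (u : ℝ × ℝ → ℝ) (c₁ c₂ : ℝ) : ℝ≥0∞ :=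
  anisoTV Ω u
    + ENNReal.ofReal (μ * ∫ x in Ω, (u x * (c₁ - f x) ^ 2 + (1 - u x) * (c₂ - f x) ^ 2))
    + (if ∀ᵐ x ∂(volume.restrict Ω), u x ∈ Icc (0 : ℝ) 1 then 0 else ⊤)

/-- The two-phase anisotropic Chan–Vese functional `ACV_μ`. -/
def ACV (Ω : Set (ℝ × ℝ)) (f : ℝ × ℝ → ℝ) (μ : ℝ) (Λ : Set (ℝ × ℝ)) (c₁ c₂ : ℝ) : ℝ≥0∞ :=
  Per1 Λ Ω + ENNReal.ofReal (μ * ((∫ x in Λ, (c₁ - f x) ^ 2) + ∫ x in Ω \ Λ, (c₂ - f x) ^ 2))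

/-- An axis-parallel closed rectangle. -/
def IsRectangle (R : Set (ℝ × ℝ)) : Prop :=
  ∃ a b c d : ℝ, R = Set.Icc a b ×ˢ Set.Icc c d

/-- A rectilinear polygon: a finite union of axis-parallel rectangles. -/
def IsRectilinear (E : Set (ℝ × ℝ)) : Prop :=
  ∃ (n : ℕ) (R : Fin n → Set (ℝ × ℝ)), (∀ i, IsRectangle (R i)) ∧ E = ⋃ i, R i

/-- `f` is piecewise constant on rectangles on `Ω`. -/
def PCR (Ω : Set (ℝ × ℝ)) (f : ℝ × ℝ → ℝ) : Prop :=
  ∃ S : Finset ℝ, (∀ᵐ x ∂(volume.restrict Ω), f x ∈ (S : Set ℝ)) ∧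
    ∀ c ∈ S, ∃ P : Set (ℝ × ℝ), IsRectilinear P ∧
      volume (({x ∈ Ω | f x = c} \ P) ∪ (P \ {x ∈ Ω | f x = c})) = 0

/-- `Ω` is a bounded open rectangle. -/
def IsOpenRectangle (Ω : Set (ℝ × ℝ)) : Prop :=
  ∃ a b c d : ℝ, a < b ∧ c < d ∧ Ω = Set.Ioo a b ×ˢ Set.Ioo c d



/-! ### Auxiliary machinery for Statement 0 -/

section Aux

/-- Attainment of the minimum of a lower semicontinuous `ℝ≥0∞`-valued function on a
nonempty compact set. -/
lemma lsc_exists_min {X : Type*} [TopologicalSpace X] [T2Space X] {K : Set X}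
    (hK : IsCompact K) (hne : K.Nonempty) {F : X → ℝ≥0∞}
    (hF : LowerSemicontinuous F) : ∃ x ∈ K, ∀ y ∈ K, F x ≤ F y := by
  set m := ⨅ y ∈ K, F y with hm
  by_cases htop : m = ⊤
  · obtain ⟨x, hx⟩ := hne
    refine ⟨x, hx, fun y hy => ?_⟩
    have : F y = ⊤ := by
      by_contra h
      have : m ≤ F y := biInf_le _ hy
      rw [htop] at this
      exact h (top_le_iff.mp this)
    simp [this]
  · have hmlt : m < ⊤ := lt_top_iff_ne_top.mpr htop
    haveI : Nonempty {t : ℝ≥0∞ // m < t} := ⟨⟨⊤, hmlt⟩⟩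
    set Z : {t : ℝ≥0∞ // m < t} → Set X := fun t => K ∩ {x | F x ≤ t.1} with hZ
    have hZne : ∀ t, (Z t).Nonempty := by
      rintro ⟨t, ht⟩
      have : ⨅ y ∈ K, F y < t := ht
      rw [iInf_lt_iff] at this
      obtain ⟨y, hy⟩ := this
      rw [iInf_lt_iff] at hy
      obtain ⟨hyK, hylt⟩ := hy
      exact ⟨y, hyK, le_of_lt hylt⟩
    have hZcl : ∀ t, IsClosed (Z t) := fun t =>
      hK.isClosed.inter (hF.isClosed_preimage t.1)
    have hZc : ∀ t, IsCompact (Z t) := fun t => hK.inter_right (hF.isClosed_preimage t.1)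
    have hdir : Directed (· ⊇ ·) Z := by
      rintro ⟨t, ht⟩ ⟨s, hs⟩
      refine ⟨⟨min t s, lt_min ht hs⟩, ?_, ?_⟩ <;>
        · rintro x ⟨hxK, hxle⟩
          simp only [mem_setOf_eq] at hxle ⊢
          exact ⟨hxK, le_trans hxle (by simp [min_le_left, min_le_right])⟩
    obtain ⟨x, hx⟩ := IsCompact.nonempty_iInter_of_directed_nonempty_isCompact_isClosed
      Z hdir hZne hZc hZcl
    simp only [mem_iInter] at hx
    have hxK : x ∈ K := (hx ⟨⊤, hmlt⟩).1
    refine ⟨x, hxK, fun y hy => ?_⟩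
    have hxm : F x ≤ m := by
      refine le_of_forall_gt_imp_ge_of_dense fun t ht => ?_
      exact (hx ⟨t, ht⟩).2
    exact hxm.trans (biInf_le _ hy)

variable (ν : Measure (ℝ × ℝ)) [IsFiniteMeasure ν]

/-- The constraint set `{u ∈ L² : 0 ≤ u ≤ 1 a.e.}`. -/
def Kset : Set (Lp ℝ 2 ν) := {u | ∀ᵐ x ∂ν, (u : (ℝ×ℝ) → ℝ) x ∈ Icc (0:ℝ) 1}

/-- The embedding of `L²` into its weak-star dual, via the Riesz isometry. -/
def Jmap (u : Lp ℝ 2 ν) : WeakDual ℝ (Lp ℝ 2 ν) :=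
  StrongDual.toWeakDual (InnerProductSpace.toDual ℝ (Lp ℝ 2 ν) u)

omit [IsFiniteMeasure ν] in
lemma Jmap_apply (u g : Lp ℝ 2 ν) :
    Jmap ν u g = ∫ x, (u : (ℝ×ℝ)→ℝ) x * (g : (ℝ×ℝ)→ℝ) x ∂ν := by
  have : Jmap ν u g = (inner ℝ u g : ℝ) := rfl
  rw [this, L2.inner_def]
  exact integral_congr_ae (Eventually.of_forall fun x => by simp [mul_comm])

lemma integrable_Lp (g : Lp ℝ 2 ν) : Integrable (g : (ℝ×ℝ)→ℝ) ν :=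
  (Lp.memLp g).integrable one_le_two

lemma Jmap_mem_iff (φ : WeakDual ℝ (Lp ℝ 2 ν)) :
    φ ∈ Jmap ν '' Kset ν ↔ ∀ g : Lp ℝ 2 ν, (0 ≤ᵐ[ν] (g : (ℝ×ℝ)→ℝ)) →
      φ g ∈ Icc (0:ℝ) (∫ x, (g : (ℝ×ℝ)→ℝ) x ∂ν) := by
  constructor
  · rintro ⟨u, hu, rfl⟩ g hg
    rw [Jmap_apply]
    have hintug : Integrable (fun x => (u : (ℝ×ℝ)→ℝ) x * (g : (ℝ×ℝ)→ℝ) x) ν := by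
      refine (integrable_Lp ν g).bdd_mul (c := 1) (Lp.aestronglyMeasurable u) ?_
      filter_upwards [hu] with x hx
      rw [Real.norm_eq_abs, abs_le]
      exact ⟨by linarith [hx.1], hx.2⟩
    constructor
    · refine integral_nonneg_of_ae ?_
      filter_upwards [hu, hg] with x hx hgx
      exact mul_nonneg hx.1 hgx
    · refine integral_mono_ae hintug (integrable_Lp ν g) ?_
      filter_upwards [hu, hg] with x hx hgx
      calc (u : (ℝ×ℝ)→ℝ) x * (g : (ℝ×ℝ)→ℝ) x ≤ 1 * (g : (ℝ×ℝ)→ℝ) x := by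
            exact mul_le_mul_of_nonneg_right hx.2 hgx
        _ = (g : (ℝ×ℝ)→ℝ) x := one_mul _
  · intro h
    set u := (InnerProductSpace.toDual ℝ (Lp ℝ 2 ν)).symm φ with hudef
    have hφ : Jmap ν u = φ := by
      simp only [Jmap, hudef, LinearIsometryEquiv.apply_symm_apply]
      exact congrArg StrongDual.toWeakDual ((InnerProductSpace.toDual ℝ (Lp ℝ 2 ν)).apply_symm_apply φ)
    have key : ∀ (s : Set (ℝ×ℝ)) (hs : MeasurableSet s),
        φ (indicatorConstLp 2 hs (measure_ne_top ν s) (1:ℝ)) ∈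
          Icc (0:ℝ) ((ν s).toReal) := by
      intro s hs
      have hg0 : 0 ≤ᵐ[ν] ((indicatorConstLp 2 hs (measure_ne_top ν s) (1:ℝ) : Lp ℝ 2 ν) : (ℝ×ℝ)→ℝ) := by
        filter_upwards [indicatorConstLp_coeFn (p := 2) (μ := ν) (hs := hs)
          (hμs := measure_ne_top ν s) (c := (1:ℝ))] with x hx
        rw [hx]
        exact Set.indicator_nonneg (fun _ _ => zero_le_one) x
      have h2 := h _ hg0
      have hgint : ∫ x, ((indicatorConstLp 2 hs (measure_ne_top ν s) (1:ℝ) : Lp ℝ 2 ν) : (ℝ×ℝ)→ℝ) x ∂ν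
          = (ν s).toReal := by
        rw [integral_congr_ae (indicatorConstLp_coeFn)]
        rw [integral_indicator_const (1:ℝ) hs]
        simp [measureReal_def]
      rw [hgint] at h2
      exact h2
    have hinner : ∀ (s : Set (ℝ×ℝ)) (hs : MeasurableSet s),
        φ (indicatorConstLp 2 hs (measure_ne_top ν s) (1:ℝ)) = ∫ x in s, (u : (ℝ×ℝ)→ℝ) x ∂ν := by
      intro s hs
      rw [← hφ]
      have : Jmap ν u (indicatorConstLp 2 hs (measure_ne_top ν s) (1:ℝ)) =
          (inner ℝ u (indicatorConstLp 2 hs (measure_ne_top ν s) (1:ℝ)) : ℝ) := rfl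
      rw [this, real_inner_comm, L2.inner_indicatorConstLp_one]
    have hint_u : Integrable (u : (ℝ×ℝ)→ℝ) ν := integrable_Lp ν u
    have h0 : 0 ≤ᵐ[ν] (u : (ℝ×ℝ)→ℝ) := by
      refine ae_nonneg_of_forall_setIntegral_nonneg hint_u ?_
      intro s hs _
      rw [← hinner s hs]
      exact (key s hs).1
    have h1 : (u : (ℝ×ℝ)→ℝ) ≤ᵐ[ν] fun _ => (1:ℝ) := by
      have : 0 ≤ᵐ[ν] fun x => 1 - (u : (ℝ×ℝ)→ℝ) x := by
        refine ae_nonneg_of_forall_setIntegral_nonneg ((integrable_const 1).sub hint_u) ?_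
        intro s hs _
        rw [integral_sub (integrable_const 1).integrableOn hint_u.integrableOn]
        rw [setIntegral_const]
        rw [← hinner s hs]
        have := (key s hs).2
        simp only [smul_eq_mul, mul_one, measureReal_def]
        linarith
      filter_upwards [this] with x hx
      simpa using hx
    exact ⟨u, by filter_upwards [h0, h1] with x hx0 hx1; exact ⟨hx0, hx1⟩, hφ⟩

lemma Jmap_image_isCompact : IsCompact (Jmap ν '' Kset ν) := by
  refine WeakDual.isCompact_of_bounded_of_closed ?_ ?_
  · refine (Metric.isBounded_iff_subset_closedBall (α := StrongDual ℝ (Lp ℝ 2 ν)) 0).mpr ?_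
    refine ⟨(measureUnivNNReal ν : ℝ) ^ (2:ℝ≥0∞).toReal⁻¹ * 1, ?_⟩
    rintro ψ hψ
    rcases hψ with ⟨u, hu, huψ⟩
    have hnorm : ‖u‖ ≤ (measureUnivNNReal ν : ℝ) ^ (2:ℝ≥0∞).toReal⁻¹ * 1 := by
      refine Lp.norm_le_of_ae_bound zero_le_one ?_
      filter_upwards [hu] with x hx
      rw [Real.norm_eq_abs, abs_le]
      exact ⟨by linarith [hx.1], hx.2⟩
    have : StrongDual.toWeakDual ψ = Jmap ν u := huψ.symm
    have hψu : ψ = InnerProductSpace.toDual ℝ (Lp ℝ 2 ν) u := by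
      apply StrongDual.toWeakDual.injective
      exact this
    rw [Metric.mem_closedBall, dist_zero_right, hψu]
    rw [LinearIsometryEquiv.norm_map]
    exact hnorm
  · have : Jmap ν '' Kset ν = ⋂ g : {g : Lp ℝ 2 ν // 0 ≤ᵐ[ν] ((g : Lp ℝ 2 ν) : (ℝ×ℝ)→ℝ)},
        (fun φ : WeakDual ℝ (Lp ℝ 2 ν) => φ g.1) ⁻¹' (Icc (0:ℝ) (∫ x, ((g.1 : Lp ℝ 2 ν) : (ℝ×ℝ)→ℝ) x ∂ν)) := by
      ext φ
      rw [Jmap_mem_iff]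
      simp only [mem_iInter, mem_preimage, Subtype.forall]
    rw [this]
    exact isClosed_iInter fun g =>
      (isClosed_Icc).preimage (WeakDual.eval_continuous g.1)

/-- The admissibility predicate for vector fields in the dual formulation of `anisoTV`. -/
def Adm (Ω : Set (ℝ × ℝ)) (η : ℝ × ℝ → ℝ × ℝ) : Prop :=
  ContDiff ℝ 1 η ∧ HasCompactSupport η ∧ tsupport η ⊆ Ω ∧
    ∀ x, |(η x).1| ≤ 1 ∧ |(η x).2| ≤ 1

lemma div2_continuous {η : ℝ × ℝ → ℝ × ℝ} (hη : ContDiff ℝ 1 η) : Continuous (div2 η) := by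
  have h1 : ContDiff ℝ 1 (fun y => (η y).1) := contDiff_fst.comp hη
  have h2 : ContDiff ℝ 1 (fun y => (η y).2) := contDiff_snd.comp hη
  exact ((h1.continuous_fderiv one_ne_zero).clm_apply continuous_const).add
    ((h2.continuous_fderiv one_ne_zero).clm_apply continuous_const)

lemma div2_hasCompactSupport {η : ℝ × ℝ → ℝ × ℝ} (hs : HasCompactSupport η) :
    HasCompactSupport (div2 η) := by
  have h1 : HasCompactSupport (fun y => (η y).1) :=
    hs.comp_left (g := Prod.fst) rfl
  have h2 : HasCompactSupport (fun y => (η y).2) :=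
    hs.comp_left (g := Prod.snd) rfl
  have h1' : HasCompactSupport (fun x => fderiv ℝ (fun y => (η y).1) x (1, 0)) :=
    (h1.fderiv ℝ).comp_left (g := fun L : (ℝ×ℝ) →L[ℝ] ℝ => L (1,0)) rfl
  have h2' : HasCompactSupport (fun x => fderiv ℝ (fun y => (η y).2) x (0, 1)) :=
    (h2.fderiv ℝ).comp_left (g := fun L : (ℝ×ℝ) →L[ℝ] ℝ => L (0,1)) rfl
  exact h1'.add h2'

lemma memℒp_div2 {η : ℝ × ℝ → ℝ × ℝ} (hη : ContDiff ℝ 1 η) (hs : HasCompactSupport η) :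
    MemLp (div2 η) 2 ν :=
  (div2_continuous hη).memLp_of_hasCompactSupport (div2_hasCompactSupport hs)

lemma anisoTV_eq_iSup (Ω : Set (ℝ × ℝ)) (u : ℝ × ℝ → ℝ) :
    anisoTV Ω u = ⨆ η : {η : ℝ × ℝ → ℝ × ℝ // Adm Ω η},
      ENNReal.ofReal (∫ x in Ω, u x * div2 η.1 x) := by
  rw [anisoTV, iSup]
  congr 1
  ext t
  constructor
  · rintro ⟨η, h1, h2, h3, h4, rfl⟩
    exact ⟨⟨η, h1, h2, h3, h4⟩, rfl⟩
  · rintro ⟨⟨η, h1, h2, h3, h4⟩, rfl⟩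
    exact ⟨η, h1, h2, h3, h4, rfl⟩

lemma anisoTV_congr_ae (Ω : Set (ℝ × ℝ)) {u v : ℝ × ℝ → ℝ}
    (h : u =ᵐ[volume.restrict Ω] v) : anisoTV Ω u = anisoTV Ω v := by
  rw [anisoTV_eq_iSup, anisoTV_eq_iSup]
  refine iSup_congr fun η => ?_
  congr 1
  refine integral_congr_ae ?_
  filter_upwards [h] with x hx
  rw [hx]

lemma data_eq (f : ℝ × ℝ → ℝ)
    (hf : MemLp f 2 ν) (v : ℝ × ℝ → ℝ) (hvm : AEStronglyMeasurable v ν)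
    (hv01 : ∀ᵐ x ∂ν, v x ∈ Icc (0:ℝ) 1) (a b : ℝ) :
    ∫ x, (v x * (a - f x)^2 + (1 - v x) * (b - f x)^2) ∂ν
      = (a^2-b^2) * (∫ x, v x ∂ν) - 2*(a-b) * (∫ x, v x * f x ∂ν)
        + (b^2*(ν univ).toReal - 2*b*(∫ x, f x ∂ν) + ∫ x, (f x)^2 ∂ν) := by
  have hfi : Integrable f ν := hf.integrable one_le_two
  have hf2 : Integrable (fun x => f x ^ 2) ν := hf.integrable_sq
  have hvb : ∀ᵐ x ∂ν, ‖v x‖ ≤ 1 := by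
    filter_upwards [hv01] with x hx
    rw [Real.norm_eq_abs, abs_le]; exact ⟨by linarith [hx.1], hx.2⟩
  have hvi : Integrable v ν := by
    have := (integrable_const (1:ℝ)).bdd_mul (f := v) (c := 1) hvm hvb
    simpa using this
  have hvfi : Integrable (fun x => v x * f x) ν := hfi.bdd_mul hvm hvb
  have hcongr : ∫ x, (v x * (a - f x)^2 + (1 - v x) * (b - f x)^2) ∂ν
      = ∫ x, (((a^2-b^2) * v x - 2*(a-b) * (v x * f x)) + (b^2 - 2*b*f x + f x^2)) ∂ν := by
    refine integral_congr_ae (Eventually.of_forall fun x => ?_)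
    ring
  rw [hcongr]
  have hg1 : Integrable (fun x => (a^2-b^2) * v x - 2*(a-b) * (v x * f x)) ν :=
    (hvi.const_mul _).sub (hvfi.const_mul _)
  have hg2 : Integrable (fun x => b^2 - 2*b*f x + f x^2) ν :=
    ((integrable_const (b^2)).sub (hfi.const_mul (2*b))).add hf2
  have hsub : Integrable (fun x => b^2 - 2*b*f x) ν := by
    exact (integrable_const (b^2)).sub (hfi.const_mul (2*b))
  have hsplit2 : ∫ x, (b^2 - 2*b*f x + f x^2) ∂ν
      = b^2*(ν univ).toReal - 2*b*(∫ x, f x ∂ν) + ∫ x, (f x)^2 ∂ν := by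
    rw [integral_add hsub hf2, integral_sub (integrable_const (b^2)) (hfi.const_mul (2*b)),
      integral_const_mul, integral_const]
    simp [smul_eq_mul]; rw [measureReal_def]; ring
  rw [integral_add hg1 hg2, integral_sub (hvi.const_mul _) (hvfi.const_mul _),
    integral_const_mul, integral_const_mul, hsplit2]

/-- `L²` representative of `div2 η` for admissible `η`. -/
def wLp (Ω : Set (ℝ × ℝ)) (η : {η : ℝ × ℝ → ℝ × ℝ // Adm Ω η}) : Lp ℝ 2 ν :=
  (memℒp_div2 ν η.2.1 η.2.2.1).toLp (div2 η.1)

/-- The total-variation part of the functional, on the weak-star dual. -/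
def Afun (Ω : Set (ℝ × ℝ)) (φ : WeakDual ℝ (Lp ℝ 2 ν)) : ℝ≥0∞ :=
  ⨆ η : {η : ℝ × ℝ → ℝ × ℝ // Adm Ω η}, ENNReal.ofReal (φ (wLp ν Ω η))

/-- The constant-one element of `L²`. -/
def oneLp : Lp ℝ 2 ν :=
  indicatorConstLp 2 MeasurableSet.univ (measure_ne_top ν univ) (1:ℝ)

/-- The fidelity part of the functional, on the weak-star dual. -/
def Bfun (f : ℝ × ℝ → ℝ) (hf : MemLp f 2 ν) (φ : WeakDual ℝ (Lp ℝ 2 ν)) (a b : ℝ) : ℝ :=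
  (a^2-b^2) * φ (oneLp ν) - 2*(a-b) * φ (hf.toLp f)
    + (b^2*(ν univ).toReal - 2*b*(∫ x, f x ∂ν) + ∫ x, (f x)^2 ∂ν)

/-- The full relaxed functional on the weak-star dual. -/
def Ffun (Ω : Set (ℝ × ℝ)) (f : ℝ × ℝ → ℝ) (hf : MemLp f 2 ν) (μ : ℝ)
    (p : WeakDual ℝ (Lp ℝ 2 ν) × ℝ × ℝ) : ℝ≥0∞ :=
  Afun ν Ω p.1 + ENNReal.ofReal (μ * Bfun ν f hf p.1 p.2.1 p.2.2)

lemma Ffun_lsc (Ω : Set (ℝ × ℝ)) (f : ℝ × ℝ → ℝ) (hf : MemLp f 2 ν) (μ : ℝ) :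
    LowerSemicontinuous (Ffun ν Ω f hf μ) := by
  have hA : LowerSemicontinuous fun p : WeakDual ℝ (Lp ℝ 2 ν) × ℝ × ℝ => Afun ν Ω p.1 := by
    have h : ∀ η : {η : ℝ × ℝ → ℝ × ℝ // Adm Ω η}, LowerSemicontinuous
        (fun p : WeakDual ℝ (Lp ℝ 2 ν) × ℝ × ℝ => ENNReal.ofReal (p.1 (wLp ν Ω η))) :=
      fun η => (ENNReal.continuous_ofReal.comp
        ((WeakDual.eval_continuous _).comp continuous_fst)).lowerSemicontinuous
    exact lowerSemicontinuous_iSup h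
  have hBc : Continuous fun p : WeakDual ℝ (Lp ℝ 2 ν) × ℝ × ℝ =>
      ENNReal.ofReal (μ * Bfun ν f hf p.1 p.2.1 p.2.2) := by
    apply ENNReal.continuous_ofReal.comp
    apply Continuous.mul continuous_const
    have h1 : Continuous fun p : WeakDual ℝ (Lp ℝ 2 ν) × ℝ × ℝ => p.1 (oneLp ν) :=
      (WeakDual.eval_continuous _).comp continuous_fst
    have h2 : Continuous fun p : WeakDual ℝ (Lp ℝ 2 ν) × ℝ × ℝ => p.1 (hf.toLp f) :=
      (WeakDual.eval_continuous _).comp continuous_fst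
    have ha : Continuous fun p : WeakDual ℝ (Lp ℝ 2 ν) × ℝ × ℝ => p.2.1 :=
      continuous_fst.comp continuous_snd
    have hb : Continuous fun p : WeakDual ℝ (Lp ℝ 2 ν) × ℝ × ℝ => p.2.2 :=
      continuous_snd.comp continuous_snd
    exact ((((ha.pow 2).sub (hb.pow 2)).mul h1).sub
        ((continuous_const.mul (ha.sub hb)).mul h2)).add
      ((((hb.pow 2).mul continuous_const).sub
        ((continuous_const.mul hb).mul continuous_const)).add continuous_const)
  exact hA.add hBc.lowerSemicontinuous

lemma Jmap_oneLp (vE : Lp ℝ 2 ν) :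
    Jmap ν vE (oneLp ν) = ∫ x, (vE : (ℝ×ℝ)→ℝ) x ∂ν := by
  have h : Jmap ν vE (oneLp ν) = (inner ℝ vE (oneLp ν) : ℝ) := rfl
  rw [h, real_inner_comm, oneLp,
    L2.inner_indicatorConstLp_one MeasurableSet.univ (measure_ne_top ν univ) vE,
    Measure.restrict_univ]

omit [IsFiniteMeasure ν] in
lemma Jmap_fLp (f : ℝ × ℝ → ℝ) (hf : MemLp f 2 ν) (vE : Lp ℝ 2 ν) :
    Jmap ν vE (hf.toLp f) = ∫ x, (vE : (ℝ×ℝ)→ℝ) x * f x ∂ν := by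
  rw [Jmap_apply]
  refine integral_congr_ae ?_
  filter_upwards [hf.coeFn_toLp] with x hx
  rw [hx]

lemma Gfun_eq_Ffun (Ω : Set (ℝ × ℝ)) (hνΩ : ν = volume.restrict Ω)
    (f : ℝ × ℝ → ℝ) (hf : MemLp f 2 ν) (μ : ℝ)
    (v : ℝ × ℝ → ℝ) (vE : Lp ℝ 2 ν)
    (hvE : v =ᵐ[ν] (vE : (ℝ×ℝ)→ℝ)) (hK : vE ∈ Kset ν) (a b : ℝ) :
    Gfun Ω f μ v a b = Ffun ν Ω f hf μ (Jmap ν vE, a, b) := by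
  subst hνΩ
  have hv01 : ∀ᵐ x ∂(volume.restrict Ω), v x ∈ Icc (0:ℝ) 1 := by
    filter_upwards [hvE, hK] with x h1 h2
    rw [h1]; exact h2
  have hvm : AEStronglyMeasurable v (volume.restrict Ω) :=
    (Lp.aestronglyMeasurable vE).congr hvE.symm
  rw [Gfun, if_pos hv01, add_zero, Ffun]
  congr 1
  · -- total variation parts agree
    rw [anisoTV_congr_ae Ω hvE, anisoTV_eq_iSup]
    refine iSup_congr fun η => ?_
    congr 1
    rw [Jmap_apply]
    refine integral_congr_ae ?_
    filter_upwards [MemLp.coeFn_toLp (memℒp_div2 (volume.restrict Ω) η.2.1 η.2.2.1)] with x hx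
    rw [wLp, hx]
  · -- fidelity parts agree
    congr 1
    rw [data_eq (volume.restrict Ω) f hf v hvm hv01 a b, Bfun,
      Jmap_oneLp, Jmap_fLp]
    have e1 : ∫ x, v x ∂(volume.restrict Ω) = ∫ x, (vE : (ℝ×ℝ)→ℝ) x ∂(volume.restrict Ω) :=
      integral_congr_ae hvE
    have e2 : ∫ x, v x * f x ∂(volume.restrict Ω)
        = ∫ x, (vE : (ℝ×ℝ)→ℝ) x * f x ∂(volume.restrict Ω) := by
      refine integral_congr_ae ?_
      filter_upwards [hvE] with x hx
      rw [hx]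
    rw [e1, e2]

end Aux

/-- Existence of a minimizer of the generalized two-phase anisotropic
Chan–Vese functional `G_μ` over `L²(Ω) × [0,1]²`; the minimizer lies in `BV(Ω) × [0,1]²`
and takes values in `[0,1]` a.e. -/
theorem exists_minimizer_Gfun
    (Ω : Set (ℝ × ℝ)) (hΩopen : IsOpen Ω) (hΩbdd : Bornology.IsBounded Ω)
    (f : ℝ × ℝ → ℝ) (hf : MemLp f 2 (volume.restrict Ω))
    (hf01 : ∀ᵐ x ∂(volume.restrict Ω), f x ∈ Icc (0 : ℝ) 1)
    (μ : ℝ) (hμ : 0 < μ) :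
    ∃ (u : ℝ × ℝ → ℝ) (c₁ c₂ : ℝ),
      MemLp u 2 (volume.restrict Ω) ∧
      MemLp u 1 (volume.restrict Ω) ∧ anisoTV Ω u ≠ ⊤ ∧
      c₁ ∈ Icc (0 : ℝ) 1 ∧ c₂ ∈ Icc (0 : ℝ) 1 ∧
      (∀ᵐ x ∂(volume.restrict Ω), u x ∈ Icc (0 : ℝ) 1) ∧
      ∀ (v : ℝ × ℝ → ℝ) (a b : ℝ), MemLp v 2 (volume.restrict Ω) →
        a ∈ Icc (0 : ℝ) 1 → b ∈ Icc (0 : ℝ) 1 →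
        Gfun Ω f μ u c₁ c₂ ≤ Gfun Ω f μ v a b := by
  classical
  haveI hfin : IsFiniteMeasure (volume.restrict Ω) :=
    ⟨by rw [Measure.restrict_apply_univ]; exact hΩbdd.measure_lt_top⟩
  have h0K : (0 : Lp ℝ 2 (volume.restrict Ω)) ∈ Kset (volume.restrict Ω) := by
    filter_upwards [Lp.coeFn_zero ℝ 2 (volume.restrict Ω)] with x hx
    rw [hx]
    exact ⟨le_rfl, zero_le_one⟩
  obtain ⟨p₀, hp₀C, hp₀min⟩ := lsc_exists_min
    (K := (Jmap (volume.restrict Ω) '' Kset (volume.restrict Ω)) ×ˢ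
      ((Icc (0:ℝ) 1) ×ˢ (Icc (0:ℝ) 1)))
    ((Jmap_image_isCompact (volume.restrict Ω)).prod (isCompact_Icc.prod isCompact_Icc))
    ⟨(Jmap (volume.restrict Ω) 0, 0, 0), ⟨0, h0K, rfl⟩,
      ⟨⟨le_rfl, zero_le_one⟩, ⟨le_rfl, zero_le_one⟩⟩⟩
    (Ffun_lsc (volume.restrict Ω) Ω f hf μ)
  obtain ⟨φ₀, a₀, b₀⟩ := p₀
  obtain ⟨⟨u₀, hu₀K, hφ₀⟩, ha₀I, hb₀I⟩ := hp₀C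
  have hGu : Gfun Ω f μ (↑u₀) a₀ b₀
      = Ffun (volume.restrict Ω) Ω f hf μ (Jmap (volume.restrict Ω) u₀, a₀, b₀) :=
    Gfun_eq_Ffun (volume.restrict Ω) Ω rfl f hf μ _ u₀ EventuallyEq.rfl hu₀K a₀ b₀
  have hmin : ∀ (v : ℝ × ℝ → ℝ) (a b : ℝ), MemLp v 2 (volume.restrict Ω) →
      a ∈ Icc (0 : ℝ) 1 → b ∈ Icc (0 : ℝ) 1 →
      Gfun Ω f μ (↑u₀) a₀ b₀ ≤ Gfun Ω f μ v a b := by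
    intro v a b hv haI hbI
    by_cases hv01 : ∀ᵐ x ∂(volume.restrict Ω), v x ∈ Icc (0:ℝ) 1
    · have hvK : hv.toLp v ∈ Kset (volume.restrict Ω) := by
        filter_upwards [hv.coeFn_toLp, hv01] with x h1 h2
        rw [h1]; exact h2
      have hGv : Gfun Ω f μ v a b
          = Ffun (volume.restrict Ω) Ω f hf μ (Jmap (volume.restrict Ω) (hv.toLp v), a, b) :=
        Gfun_eq_Ffun (volume.restrict Ω) Ω rfl f hf μ v (hv.toLp v)
          hv.coeFn_toLp.symm hvK a b
      rw [hGv, hGu, hφ₀]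
      exact hp₀min (Jmap (volume.restrict Ω) (hv.toLp v), a, b)
        ⟨⟨_, hvK, rfl⟩, haI, hbI⟩
    · have : Gfun Ω f μ v a b = ⊤ := by
        rw [Gfun, if_neg hv01, add_top]
      rw [this]
      exact le_top
  have hG0ne : Gfun Ω f μ (fun _ => (0:ℝ)) 0 0 ≠ ⊤ := by
    rw [Gfun, if_pos (by filter_upwards with x; exact ⟨le_rfl, zero_le_one⟩), add_zero]
    have h1 : anisoTV Ω (fun _ => (0:ℝ)) = 0 := by
      rw [anisoTV_eq_iSup]
      simp
    rw [h1, zero_add]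
    exact ENNReal.ofReal_ne_top
  have hle0 := hmin (fun _ => 0) 0 0 (memLp_const 0)
    ⟨le_rfl, zero_le_one⟩ ⟨le_rfl, zero_le_one⟩
  have hTVle : anisoTV Ω (↑u₀) ≤ Gfun Ω f μ (↑u₀) a₀ b₀ := by
    rw [Gfun]
    exact le_self_add.trans le_self_add
  refine ⟨(u₀ : (ℝ×ℝ) → ℝ), a₀, b₀, Lp.memLp u₀,
    (Lp.memLp u₀).mono_exponent one_le_two,
    ne_top_of_le_ne_top hG0ne (hTVle.trans hle0), ha₀I, hb₀I, hu₀K, hmin⟩
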